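/- Fix a real number N > 1. Define f : [0,1) × [0,∞) → ℝ by f(t,η) := (1 + η − t^N)/(1 − t), and define g : [0,∞) → [0,∞] by g(η) := sup{ t − s : t, s ∈ [0,1), f(t,0) ≤ f(s,η) }. Then lim_{η→0⁺} g(η) = 0; equivalently, for every ε > 0 there exists η̄ > 0 such that for all η ∈ [0, η̄] and all t, s ∈ [0,1) with f(t,0) ≤ f(s,η), one has t − s ≤ ε. -/

import Mathlib

noncomputable section

/-- The function `f(t, η) = (1 + η - t^N)/(1 - t)` of Lemma 5.8. -/
def fAux (N t η : ℝ) : ℝ := (1 + η - t ^ N) / (1 - t)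

/-- The function `g(η) = sup { t - s : t, s ∈ [0,1), f(t,0) ≤ f(s,η) }` of Lemma 5.8. -/
def gAux (N η : ℝ) : ℝ :=
  sSup {d : ℝ | ∃ t s : ℝ, t ∈ Set.Ico (0:ℝ) 1 ∧ s ∈ Set.Ico (0:ℝ) 1 ∧
    fAux N t 0 ≤ fAux N s η ∧ d = t - s}

open Set Filter

lemma phi_strictMonoOn (N : ℝ) (hN : 1 < N) :
    StrictMonoOn (fun t : ℝ => fAux N t 0) (Set.Ico 0 1) := by
  intro a ha b hb hab
  have h1 : (1:ℝ) ∈ Set.Ici (0:ℝ) := by norm_num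
  have := (strictConvexOn_rpow hN).secant_strict_mono h1 (Set.mem_Ici.2 ha.1)
      (Set.mem_Ici.2 hb.1) (by linarith [ha.2]) (by linarith [hb.2]) hab
  have e1 : (1:ℝ) ^ N = 1 := Real.one_rpow N
  simp only [e1] at this
  simp only [fAux, add_zero]
  rw [show (1 - a ^ N) / (1 - a) = (a ^ N - 1) / (a - 1) by rw [← neg_div_neg_eq]; ring_nf,
      show (1 - b ^ N) / (1 - b) = (b ^ N - 1) / (b - 1) by rw [← neg_div_neg_eq]; ring_nf]
  exact this

lemma phi_continuousOn (N : ℝ) (hN : 1 < N) :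
    ContinuousOn (fun t : ℝ => fAux N t 0) (Set.Iio 1) := by
  have hc : Continuous fun t : ℝ => t ^ N := Real.continuous_rpow_const (by linarith)
  simp only [fAux]
  apply ContinuousOn.div
  · exact ((continuous_const.add continuous_const).sub hc).continuousOn
  · exact (continuous_const.sub continuous_id).continuousOn
  · intro x hx; simp only [Set.mem_Iio] at hx; intro h; linarith [sub_eq_zero.mp h]

lemma fAux_split (N s η : ℝ) (hs : s < 1) :
    fAux N s η = fAux N s 0 + η / (1 - s) := by
  have h : (1:ℝ) - s ≠ 0 := by intro h; linarith [sub_eq_zero.mp h]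
  simp only [fAux]
  ring

/-- The key quantitative statement for small ε. -/
lemma keyAux (N : ℝ) (hN : 1 < N) (ε : ℝ) (hε0 : 0 < ε) (hε1 : ε < 1) :
    ∃ ηbar : ℝ, 0 < ηbar ∧
      ∀ η : ℝ, 0 ≤ η → η ≤ ηbar →
      ∀ t s : ℝ, t ∈ Set.Ico (0:ℝ) 1 → s ∈ Set.Ico (0:ℝ) 1 →
        fAux N t 0 ≤ fAux N s η → t - s ≤ ε := by
  set φ := fun t : ℝ => fAux N t 0 with hφ
  set K := Set.Icc (0:ℝ) (1 - ε) with hK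
  have hKc : IsCompact K := isCompact_Icc
  have hKne : K.Nonempty := ⟨0, by constructor <;> linarith⟩
  have hcont : ContinuousOn (fun s => φ (s + ε/2) - φ s) K := by
    apply ContinuousOn.sub
    · exact (phi_continuousOn N hN).comp (continuous_id.add continuous_const).continuousOn
        (fun x hx => by simp only [Set.mem_Iio]; have := hx.2; simp; linarith [hx.2])
    · exact (phi_continuousOn N hN).mono (fun x hx => by simp only [Set.mem_Iio]; linarith [hx.2])
  obtain ⟨x₀, hx₀K, hx₀min⟩ := hKc.exists_isMinOn hKne hcont
  set δ := φ (x₀ + ε/2) - φ x₀ with hδ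
  have hδpos : 0 < δ := by
    have h1 : x₀ ∈ Set.Ico (0:ℝ) 1 := ⟨hx₀K.1, by linarith [hx₀K.2]⟩
    have h2 : x₀ + ε/2 ∈ Set.Ico (0:ℝ) 1 := ⟨by linarith [hx₀K.1], by linarith [hx₀K.2]⟩
    have := phi_strictMonoOn N hN h1 h2 (by linarith)
    simpa [hδ] using sub_pos.mpr this
  refine ⟨ε * δ / 2, by positivity, ?_⟩
  intro η hη0 hηbar t s ht hs hle
  by_contra hc
  push_neg at hc
  have hsK : s ∈ K := ⟨hs.1, by linarith [ht.2]⟩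
  have hmid : s + ε/2 ∈ Set.Ico (0:ℝ) 1 := ⟨by linarith [hs.1], by linarith [ht.2, hc]⟩
  have h1 : φ (s + ε/2) ≤ φ t := le_of_lt (phi_strictMonoOn N hN hmid ht (by linarith))
  have h2 : δ ≤ φ (s + ε/2) - φ s := hx₀min hsK
  have h3 : fAux N s η = φ s + η / (1 - s) := fAux_split N s η hs.2
  have h4 : η / (1 - s) ≤ η / ε := by
    gcongr
    linarith [ht.2]
  have h5 : η / ε ≤ δ / 2 := by rw [div_le_iff₀ hε0]; linarith
  have h6 : fAux N t 0 = φ t := rfl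
  rw [h6, h3] at hle
  clear_value δ
  linarith

/-- Lemma 5.8 (monotonicity of `f`): `lim_{η → 0⁺} g(η) = 0`; equivalently, for every `ε > 0`
there is `η̄ > 0` such that for all `η ∈ [0, η̄]` and `t, s ∈ [0,1)` with `f(t,0) ≤ f(s,η)`,
one has `t - s ≤ ε`. -/
theorem gAux_tendsto_zero (N : ℝ) (hN : 1 < N) :
    Filter.Tendsto (gAux N) (nhdsWithin 0 (Set.Ioi 0)) (nhds 0) ∧
    ∀ ε : ℝ, 0 < ε → ∃ ηbar : ℝ, 0 < ηbar ∧
      ∀ η : ℝ, 0 ≤ η → η ≤ ηbar →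
      ∀ t s : ℝ, t ∈ Set.Ico (0:ℝ) 1 → s ∈ Set.Ico (0:ℝ) 1 →
        fAux N t 0 ≤ fAux N s η → t - s ≤ ε := by
  have key : ∀ ε : ℝ, 0 < ε → ∃ ηbar : ℝ, 0 < ηbar ∧
      ∀ η : ℝ, 0 ≤ η → η ≤ ηbar →
      ∀ t s : ℝ, t ∈ Set.Ico (0:ℝ) 1 → s ∈ Set.Ico (0:ℝ) 1 →
        fAux N t 0 ≤ fAux N s η → t - s ≤ ε := by
    intro ε hε
    obtain ⟨ηbar, hpos, h⟩ := keyAux N hN (min ε (1/2)) (lt_min hε (by norm_num))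
      (lt_of_le_of_lt (min_le_right _ _) (by norm_num))
    exact ⟨ηbar, hpos, fun η h0 h1 t s ht hs hle =>
      le_trans (h η h0 h1 t s ht hs hle) (min_le_left _ _)⟩
  refine ⟨?_, key⟩
  rw [Metric.tendsto_nhds]
  intro ε hε
  obtain ⟨ηbar, hpos, h⟩ := key (ε/2) (by positivity)
  filter_upwards [Ioc_mem_nhdsGT_of_mem (Set.left_mem_Ico.mpr hpos)] with η hη
  set S := {d : ℝ | ∃ t s : ℝ, t ∈ Set.Ico (0:ℝ) 1 ∧ s ∈ Set.Ico (0:ℝ) 1 ∧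
    fAux N t 0 ≤ fAux N s η ∧ d = t - s} with hS
  have hb : ∀ d ∈ S, d ≤ ε/2 := by
    rintro d ⟨t, s, ht, hs, hle, rfl⟩
    exact h η hη.1.le hη.2 t s ht hs hle
  have h0 : (0:ℝ) ∈ S := by
    refine ⟨0, 0, ⟨le_refl _, zero_lt_one⟩, ⟨le_refl _, zero_lt_one⟩, ?_, by ring⟩
    have : (0:ℝ) ^ N = 0 := Real.zero_rpow (by linarith)
    simp [fAux, this]
    linarith [hη.1]
  have hg1 : gAux N η ≤ ε/2 := Real.sSup_le hb (by positivity)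
  have hg0 : 0 ≤ gAux N η := le_csSup ⟨ε/2, fun d hd => hb d hd⟩ h0
  rw [Real.dist_eq]
  rw [abs_of_nonneg (by simpa using hg0)]
  simp only [sub_zero]
  linarith
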